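/- arXiv:1510.08094 — 4 statements merged into one kernel-verified Lean document; each statement's English description precedes it below -/
import Mathlib

section
/- If f̃ is a BMC function satisfying f̃(λ−π,θ) = f̃(λ,−θ), and a GE update is applied: f̃ ← f̃ − [f̃(λ*−π,θ), f̃(λ*,θ)] · N · [f̃(λ,θ*); f̃(λ,−θ*)], where N is any 2×2 centrosymmetric matrix, then the residual is again a BMC function. -/
open Real

/-- A GE update with a 2×2 centrosymmetric pivot matrix `N = ![![p,q],![q,p]]`
preserves the BMC symmetry `f̃(λ−π,θ) = f̃(λ,−θ)`: the residual is again BMC. -/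
theorem ge_update_preserves_bmc (f : ℝ → ℝ → ℂ) (p q : ℂ) (lam₀ θ₀ : ℝ)
    (hBMC : ∀ lam θ : ℝ, f (lam - π) θ = f lam (-θ)) :
    let e : ℝ → ℝ → ℂ := fun lam θ =>
      f lam θ -
        (f (lam₀ - π) θ * (p * f lam θ₀ + q * f lam (-θ₀)) +
          f lam₀ θ * (q * f lam θ₀ + p * f lam (-θ₀)))
    ∀ lam θ : ℝ, e (lam - π) θ = e lam (-θ) := by
  intro e lam θ
  simp only [e, hBMC, neg_neg]
  rw [← hBMC lam₀ θ, hBMC lam₀ θ]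
  rw [show f lam₀ (-θ) = f (lam₀ - π) θ from (hBMC lam₀ θ).symm]
  ring
end

section
/- Let f̃ be a bounded BMC function with ‖f̃‖_∞ its sup norm, and let M be a 2×2 pivot matrix as in the structure-preserving GE step with σ₁(M) ≥ ‖f̃‖_∞. If σ₂(M) < α·σ₁(M) and the rank-1 ε-pseudoinverse M^{†ε} (with ε = α σ₁(M)) is used in the GE update, then the sup norm of the residual is at most 3‖f̃‖_∞. -/
open Real

/-- Growth bound, rank-1 case: if the pivot matrix `M = ![![a,b],![b,a]]` (with
`a = f̃(λ*−π,θ*)`, `b = f̃(λ*,θ*)`) satisfies `σ₁(M) ≥ ‖f̃‖_∞` and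
`σ₂(M) < α·σ₁(M)`, and the rank-1 ε-pseudoinverse (ε = α σ₁(M)) is used in the
GE update, then the residual has sup norm at most `3‖f̃‖_∞`. -/
theorem ge_growth_bound_rank_one (f : ℝ → ℝ → ℂ) (C α : ℝ) (lam₀ θ₀ : ℝ)
    (hbd : ∀ lam θ : ℝ, ‖f lam θ‖ ≤ C)
    (hBMC : ∀ lam θ : ℝ, f (lam - π) θ = f lam (-θ))
    (a b : ℂ) (ha : a = f (lam₀ - π) θ₀) (hb : b = f lam₀ θ₀)
    (hα₀ : 0 < α) (hα₁ : α ≤ 1)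
    (hσ₁ : C ≤ max ‖a + b‖ ‖a - b‖)
    (hσ₂ : min ‖a + b‖ ‖a - b‖ < α * max ‖a + b‖ ‖a - b‖) :
    ∀ lam θ : ℝ,
      ‖f lam θ -
          (if ‖a - b‖ ≤ ‖a + b‖ then
            (f (lam₀ - π) θ + f lam₀ θ) * (f lam θ₀ + f lam (-θ₀)) / (2 * (a + b))
          else
            (f (lam₀ - π) θ - f lam₀ θ) * (f lam θ₀ - f lam (-θ₀)) / (2 * (a - b)))‖ ≤
        3 * C := by
  intro lam θ
  have hC0 : 0 ≤ C := le_trans (norm_nonneg _) (hbd 0 0)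
  have hmin0 : 0 ≤ min ‖a + b‖ ‖a - b‖ := le_min (norm_nonneg _) (norm_nonneg _)
  have hmaxpos : 0 < max ‖a + b‖ ‖a - b‖ := by
    by_contra h
    push_neg at h
    nlinarith [hσ₂, hmin0]
  have key : ∀ x y d : ℂ, ‖x‖ ≤ 2 * C → ‖y‖ ≤ 2 * C → C ≤ ‖d‖ → 0 < ‖d‖ →
      ‖x * y / (2 * d)‖ ≤ 2 * C := by
    intro x y d hx hy hd hd0
    have h2 : ‖(2 : ℂ)‖ = 2 := by simp
    rw [norm_div, norm_mul, norm_mul, h2]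
    rw [div_le_iff₀ (by nlinarith)]
    nlinarith [norm_nonneg x, norm_nonneg y]
  split_ifs with h
  · have hmax : max ‖a + b‖ ‖a - b‖ = ‖a + b‖ := max_eq_left h
    have hd : C ≤ ‖a + b‖ := hmax ▸ hσ₁
    have hd0 : 0 < ‖a + b‖ := hmax ▸ hmaxpos
    have hx : ‖f (lam₀ - π) θ + f lam₀ θ‖ ≤ 2 * C := by
      calc ‖f (lam₀ - π) θ + f lam₀ θ‖ ≤ ‖f (lam₀ - π) θ‖ + ‖f lam₀ θ‖ := norm_add_le _ _
        _ ≤ 2 * C := by linarith [hbd (lam₀ - π) θ, hbd lam₀ θ]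
    have hy : ‖f lam θ₀ + f lam (-θ₀)‖ ≤ 2 * C := by
      calc ‖f lam θ₀ + f lam (-θ₀)‖ ≤ ‖f lam θ₀‖ + ‖f lam (-θ₀)‖ := norm_add_le _ _
        _ ≤ 2 * C := by linarith [hbd lam θ₀, hbd lam (-θ₀)]
    calc ‖_ - _‖ ≤ ‖f lam θ‖ + ‖(f (lam₀ - π) θ + f lam₀ θ) * (f lam θ₀ + f lam (-θ₀)) / (2 * (a + b))‖ := norm_sub_le _ _
      _ ≤ C + 2 * C := add_le_add (hbd lam θ) (key _ _ _ hx hy hd hd0)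
      _ = 3 * C := by ring
  · push_neg at h
    have hmax : max ‖a + b‖ ‖a - b‖ = ‖a - b‖ := max_eq_right h.le
    have hd : C ≤ ‖a - b‖ := hmax ▸ hσ₁
    have hd0 : 0 < ‖a - b‖ := hmax ▸ hmaxpos
    have hx : ‖f (lam₀ - π) θ - f lam₀ θ‖ ≤ 2 * C := by
      calc ‖f (lam₀ - π) θ - f lam₀ θ‖ ≤ ‖f (lam₀ - π) θ‖ + ‖f lam₀ θ‖ := norm_sub_le _ _
        _ ≤ 2 * C := by linarith [hbd (lam₀ - π) θ, hbd lam₀ θ]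
    have hy : ‖f lam θ₀ - f lam (-θ₀)‖ ≤ 2 * C := by
      calc ‖f lam θ₀ - f lam (-θ₀)‖ ≤ ‖f lam θ₀‖ + ‖f lam (-θ₀)‖ := norm_sub_le _ _
        _ ≤ 2 * C := by linarith [hbd lam θ₀, hbd lam (-θ₀)]
    calc ‖_ - _‖ ≤ ‖f lam θ‖ + ‖(f (lam₀ - π) θ - f lam₀ θ) * (f lam θ₀ - f lam (-θ₀)) / (2 * (a - b))‖ := norm_sub_le _ _
      _ ≤ C + 2 * C := add_le_add (hbd lam θ) (key _ _ _ hx hy hd hd0)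
      _ = 3 * C := by ring
end

section
/- Let f̃ be a bounded BMC function and M a 2×2 pivot matrix in the structure-preserving GE step with σ₁(M) ≥ ‖f̃‖_∞ and σ₂(M) ≥ α·σ₁(M) for some α ∈ (0,1]. Then every entry of M⁻¹ is bounded in absolute value by 1/(α‖f̃‖_∞), and consequently the residual of the GE update has sup norm at most (1 + 4/α)·‖f̃‖_∞. -/
open Real

/-- Growth bound, rank-2 case: if the pivot matrix `M = ![![a,b],![b,a]]` satisfies
`σ₁(M) ≥ ‖f̃‖_∞` and `σ₂(M) ≥ α·σ₁(M)` with `α ∈ (0,1]`, then every entry of `M⁻¹`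
is bounded by `1/(α‖f̃‖_∞)` in absolute value, and the GE residual has sup norm at
most `(1 + 4/α)·‖f̃‖_∞`. -/
theorem ge_growth_bound_rank_two (f : ℝ → ℝ → ℂ) (C α : ℝ) (lam₀ θ₀ : ℝ)
    (hbd : ∀ lam θ : ℝ, ‖f lam θ‖ ≤ C)
    (hBMC : ∀ lam θ : ℝ, f (lam - π) θ = f lam (-θ))
    (a b : ℂ) (ha : a = f (lam₀ - π) θ₀) (hb : b = f lam₀ θ₀)
    (hα₀ : 0 < α) (hα₁ : α ≤ 1)
    (hσ₁ : C ≤ max ‖a + b‖ ‖a - b‖)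
    (hσ₂ : α * max ‖a + b‖ ‖a - b‖ ≤ min ‖a + b‖ ‖a - b‖)
    (hunit : IsUnit (!![a, b; b, a] : Matrix (Fin 2) (Fin 2) ℂ).det) :
    let M : Matrix (Fin 2) (Fin 2) ℂ := !![a, b; b, a]
    (∀ i j : Fin 2, ‖M⁻¹ i j‖ ≤ 1 / (α * C)) ∧
      ∀ lam θ : ℝ,
        ‖f lam θ -
            (f (lam₀ - π) θ * (M⁻¹ 0 0 * f lam θ₀ + M⁻¹ 0 1 * f lam (-θ₀)) +
              f lam₀ θ * (M⁻¹ 1 0 * f lam θ₀ + M⁻¹ 1 1 * f lam (-θ₀)))‖ ≤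
          (1 + 4 / α) * C := by
  intro M
  have hC0 : 0 ≤ C := le_trans (norm_nonneg _) (hbd 0 0)
  have hdet : M.det = (a + b) * (a - b) := by
    simp [M, Matrix.det_fin_two_of]; ring
  have hdetne : M.det ≠ 0 := hunit.ne_zero
  have hC : 0 < C := by
    rcases lt_or_eq_of_le hC0 with h | h
    · exact h
    · exfalso
      have ha0 : a = 0 := by
        have h1 := hbd (lam₀ - π) θ₀
        rw [← ha, ← h] at h1
        exact norm_le_zero_iff.mp h1
      have hb0 : b = 0 := by
        have h1 := hbd lam₀ θ₀
        rw [← hb, ← h] at h1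
        exact norm_le_zero_iff.mp h1
      apply hdetne
      rw [hdet, ha0, hb0]; ring
  set s := max ‖a + b‖ ‖a - b‖ with hs
  set m := min ‖a + b‖ ‖a - b‖ with hm
  have hsp : 0 < s := lt_of_lt_of_le hC hσ₁
  have hmp : 0 < m := lt_of_lt_of_le (mul_pos hα₀ hsp) hσ₂
  have hdetnorm : ‖M.det‖ = m * s := by
    rw [hdet, norm_mul, hs, hm]
    exact (min_mul_max _ _).symm
  have ha_le : ‖a‖ ≤ s := by
    have h1 : a = ((a + b) + (a - b)) / 2 := by ring
    rw [h1, norm_div]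
    have h2 : ‖(2 : ℂ)‖ = 2 := by norm_num
    rw [h2]
    have h3 := norm_add_le (a + b) (a - b)
    have h4 : ‖a + b‖ ≤ s := le_max_left _ _
    have h5 : ‖a - b‖ ≤ s := le_max_right _ _
    linarith
  have hb_le : ‖b‖ ≤ s := by
    have h1 : b = ((a + b) - (a - b)) / 2 := by ring
    rw [h1, norm_div]
    have h2 : ‖(2 : ℂ)‖ = 2 := by norm_num
    rw [h2]
    have h3 := norm_sub_le (a + b) (a - b)
    have h4 : ‖a + b‖ ≤ s := le_max_left _ _
    have h5 : ‖a - b‖ ≤ s := le_max_right _ _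
    linarith
  have key : ∀ x : ℂ, ‖x‖ ≤ s → ‖(M.det)⁻¹ * x‖ ≤ 1 / (α * C) := by
    intro x hx
    rw [norm_mul, norm_inv, hdetnorm]
    have h1 : (m * s)⁻¹ * ‖x‖ ≤ (m * s)⁻¹ * s := by
      apply mul_le_mul_of_nonneg_left hx
      positivity
    have h2 : (m * s)⁻¹ * s = 1 / m := by
      field_simp [mul_comm]
    have h3 : 1 / m ≤ 1 / (α * C) := by
      apply one_div_le_one_div_of_le (mul_pos hα₀ hC)
      calc α * C ≤ α * s := by
            exact mul_le_mul_of_nonneg_left hσ₁ (le_of_lt hα₀)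
        _ ≤ m := hσ₂
    linarith
  have hadj : M.adjugate = !![a, -b; -b, a] := by
    simp [M, Matrix.adjugate_fin_two]
  have hinv : M⁻¹ = (M.det)⁻¹ • !![a, -b; -b, a] := by
    rw [Matrix.inv_def, hadj, Ring.inverse_eq_inv']
  have e00 : M⁻¹ 0 0 = (M.det)⁻¹ * a := by rw [hinv]; simp
  have e01 : M⁻¹ 0 1 = (M.det)⁻¹ * (-b) := by rw [hinv]; simp
  have e10 : M⁻¹ 1 0 = (M.det)⁻¹ * (-b) := by rw [hinv]; simp
  have e11 : M⁻¹ 1 1 = (M.det)⁻¹ * a := by rw [hinv]; simp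
  have hnb : ‖(-b : ℂ)‖ ≤ s := by rwa [norm_neg]
  have part1 : ∀ i j : Fin 2, ‖M⁻¹ i j‖ ≤ 1 / (α * C) := by
    intro i j
    fin_cases i <;> fin_cases j
    · show ‖M⁻¹ 0 0‖ ≤ 1 / (α * C); rw [e00]; exact key a ha_le
    · show ‖M⁻¹ 0 1‖ ≤ 1 / (α * C); rw [e01]; exact key (-b) hnb
    · show ‖M⁻¹ 1 0‖ ≤ 1 / (α * C); rw [e10]; exact key (-b) hnb
    · show ‖M⁻¹ 1 1‖ ≤ 1 / (α * C); rw [e11]; exact key a ha_le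
  refine ⟨part1, ?_⟩
  intro lam θ
  set Kb := 1 / (α * C) with hKb
  have hKb0 : 0 ≤ Kb := by positivity
  have hin1 : ‖M⁻¹ 0 0 * f lam θ₀ + M⁻¹ 0 1 * f lam (-θ₀)‖ ≤ 2 * (Kb * C) := by
    calc ‖M⁻¹ 0 0 * f lam θ₀ + M⁻¹ 0 1 * f lam (-θ₀)‖
        ≤ ‖M⁻¹ 0 0 * f lam θ₀‖ + ‖M⁻¹ 0 1 * f lam (-θ₀)‖ := norm_add_le _ _
      _ ≤ Kb * C + Kb * C := by
          rw [norm_mul, norm_mul]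
          exact add_le_add
            (mul_le_mul (part1 0 0) (hbd _ _) (norm_nonneg _) hKb0)
            (mul_le_mul (part1 0 1) (hbd _ _) (norm_nonneg _) hKb0)
      _ = 2 * (Kb * C) := by ring
  have hin2 : ‖M⁻¹ 1 0 * f lam θ₀ + M⁻¹ 1 1 * f lam (-θ₀)‖ ≤ 2 * (Kb * C) := by
    calc ‖M⁻¹ 1 0 * f lam θ₀ + M⁻¹ 1 1 * f lam (-θ₀)‖
        ≤ ‖M⁻¹ 1 0 * f lam θ₀‖ + ‖M⁻¹ 1 1 * f lam (-θ₀)‖ := norm_add_le _ _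
      _ ≤ Kb * C + Kb * C := by
          rw [norm_mul, norm_mul]
          exact add_le_add
            (mul_le_mul (part1 1 0) (hbd _ _) (norm_nonneg _) hKb0)
            (mul_le_mul (part1 1 1) (hbd _ _) (norm_nonneg _) hKb0)
      _ = 2 * (Kb * C) := by ring
  have hT1 : ‖f (lam₀ - π) θ * (M⁻¹ 0 0 * f lam θ₀ + M⁻¹ 0 1 * f lam (-θ₀))‖
      ≤ C * (2 * (Kb * C)) := by
    rw [norm_mul]
    exact mul_le_mul (hbd _ _) hin1 (norm_nonneg _) hC0
  have hT2 : ‖f lam₀ θ * (M⁻¹ 1 0 * f lam θ₀ + M⁻¹ 1 1 * f lam (-θ₀))‖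
      ≤ C * (2 * (Kb * C)) := by
    rw [norm_mul]
    exact mul_le_mul (hbd _ _) hin2 (norm_nonneg _) hC0
  have htri := norm_sub_le (f lam θ)
    (f (lam₀ - π) θ * (M⁻¹ 0 0 * f lam θ₀ + M⁻¹ 0 1 * f lam (-θ₀)) +
      f lam₀ θ * (M⁻¹ 1 0 * f lam θ₀ + M⁻¹ 1 1 * f lam (-θ₀)))
  have htri2 := norm_add_le
    (f (lam₀ - π) θ * (M⁻¹ 0 0 * f lam θ₀ + M⁻¹ 0 1 * f lam (-θ₀)))
    (f lam₀ θ * (M⁻¹ 1 0 * f lam θ₀ + M⁻¹ 1 1 * f lam (-θ₀)))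
  have hfb := hbd lam θ
  have hfinal : C + 2 * (C * (2 * (Kb * C))) = (1 + 4 / α) * C := by
    rw [hKb]
    field_simp
    ring
  linarith
end

section
/- If u : ℝ² → ℂ is a 2π-bi-periodic BMC solution of the doubled Poisson equation sin²θ·u_θθ + cos θ sin θ·u_θ + u_λλ = sin²θ·f̃ on [−π,π]², and u is represented as a finite 2D Fourier series u(λ,θ) = Σ_j Σ_k X_{jk} e^{ijθ}e^{ikλ}, then the coefficient matrix X satisfies the Sylvester equation (M_sin² D_m² + M_cos M_sin D_m) X + X D_n² = F, where D_m = diag(ij), D_n = diag(ik), M_cos and M_sin are the tridiagonal multiplication matrices for cos θ and sin θ, and F is the coefficient matrix of sin²θ·f̃. -/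
open Real

/-- Coefficient operator for `∂/∂θ` (the matrix `D_m` acting on rows). -/
noncomputable def Dth (X : ℤ → ℤ → ℂ) : ℤ → ℤ → ℂ := fun j k => Complex.I * j * X j k

/-- Coefficient operator for multiplication by `sin θ` (the matrix `M_sin`). -/
noncomputable def MsinOp (X : ℤ → ℤ → ℂ) : ℤ → ℤ → ℂ := fun j k =>
  Complex.I / 2 * X (j + 1) k - Complex.I / 2 * X (j - 1) k

/-- Coefficient operator for multiplication by `cos θ` (the matrix `M_cos`). -/
noncomputable def McosOp (X : ℤ → ℤ → ℂ) : ℤ → ℤ → ℂ := fun j k =>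
  (X (j + 1) k + X (j - 1) k) / 2

namespace PoissonAux

noncomputable def Dlam (X : ℤ → ℤ → ℂ) : ℤ → ℤ → ℂ := fun j k => Complex.I * k * X j k

noncomputable def E (J K : Finset ℤ) (c : ℤ → ℤ → ℂ) (lam θ : ℝ) : ℂ :=
  ∑ j ∈ J, ∑ k ∈ K, c j k * Complex.exp (Complex.I * j * θ) * Complex.exp (Complex.I * k * lam)

lemma exp_hasDerivAt (a : ℂ) (t : ℝ) :
    HasDerivAt (fun s : ℝ => Complex.exp (a * s)) (a * Complex.exp (a * t)) t := by
  have h : HasDerivAt (fun s : ℝ => a * (s : ℂ)) a t := by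
    simpa using (Complex.ofRealCLM.hasDerivAt (x := t)).const_mul a
  simpa [mul_comm] using h.cexp

lemma E_hasDerivAt_theta (J K : Finset ℤ) (c : ℤ → ℤ → ℂ) (lam θ : ℝ) :
    HasDerivAt (fun t : ℝ => E J K c lam t) (E J K (Dth c) lam θ) θ := by
  unfold E Dth
  apply HasDerivAt.fun_sum; intro j _
  apply HasDerivAt.fun_sum; intro k _
  have h := ((exp_hasDerivAt (Complex.I * j) θ).const_mul (c j k)).mul_const
    (Complex.exp (Complex.I * k * lam))
  exact h.congr_deriv (by ring)

lemma E_hasDerivAt_lam (J K : Finset ℤ) (c : ℤ → ℤ → ℂ) (lam θ : ℝ) :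
    HasDerivAt (fun l : ℝ => E J K c l θ) (E J K (Dlam c) lam θ) lam := by
  unfold E Dlam
  apply HasDerivAt.fun_sum; intro j _
  apply HasDerivAt.fun_sum; intro k _
  have h := (exp_hasDerivAt (Complex.I * k) lam).const_mul
    (c j k * Complex.exp (Complex.I * j * θ))
  exact h.congr_deriv (by ring)

lemma sum_shift_up (a b : ℤ) (c : ℤ → ℂ)
    (hc : ∀ j, j ∉ Finset.Icc (a + 1) (b - 1) → c j = 0) (θ : ℝ) :
    ∑ j ∈ Finset.Icc a b, c (j + 1) * Complex.exp (Complex.I * j * θ)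
      = Complex.exp (-(Complex.I * θ)) *
        ∑ j ∈ Finset.Icc a b, c j * Complex.exp (Complex.I * j * θ) := by
  have h1 : ∑ j ∈ Finset.Icc a b, c (j + 1) * Complex.exp (Complex.I * j * θ)
      = ∑ j ∈ Finset.Icc a (b - 2), c (j + 1) * Complex.exp (Complex.I * j * θ) := by
    refine (Finset.sum_subset (Finset.Icc_subset_Icc le_rfl (by omega)) ?_).symm
    intro j hj hj2
    have : c (j + 1) = 0 := by
      apply hc; simp only [Finset.mem_Icc] at *; omega
    simp [this]
  have h2 : ∑ j ∈ Finset.Icc a b, c j * Complex.exp (Complex.I * j * θ)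
      = ∑ j ∈ Finset.Icc (a + 1) (b - 1), c j * Complex.exp (Complex.I * j * θ) := by
    refine (Finset.sum_subset (Finset.Icc_subset_Icc (by omega) (by omega)) ?_).symm
    intro j hj hj2
    simp [hc j hj2]
  rw [h1, h2, Finset.mul_sum]
  have h3 : Finset.Icc (a + 1) (b - 1) = (Finset.Icc a (b - 2)).map
      (addRightEmbedding 1) := by
    rw [Finset.map_add_right_Icc]; congr 1; omega
  rw [h3, Finset.sum_map]
  refine Finset.sum_congr rfl fun j _ => ?_
  simp only [addRightEmbedding_apply]
  rw [show Complex.exp (-(Complex.I * θ)) * (c (j + 1) * Complex.exp (Complex.I * ↑(j + 1) * θ))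
      = c (j + 1) * (Complex.exp (Complex.I * ↑(j + 1) * θ) * Complex.exp (-(Complex.I * θ))) by ring,
    ← Complex.exp_add]
  congr 2
  push_cast; ring

lemma sum_shift_down (a b : ℤ) (c : ℤ → ℂ)
    (hc : ∀ j, j ∉ Finset.Icc (a + 1) (b - 1) → c j = 0) (θ : ℝ) :
    ∑ j ∈ Finset.Icc a b, c (j - 1) * Complex.exp (Complex.I * j * θ)
      = Complex.exp (Complex.I * θ) *
        ∑ j ∈ Finset.Icc a b, c j * Complex.exp (Complex.I * j * θ) := by
  have h1 : ∑ j ∈ Finset.Icc a b, c (j - 1) * Complex.exp (Complex.I * j * θ)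
      = ∑ j ∈ Finset.Icc (a + 2) b, c (j - 1) * Complex.exp (Complex.I * j * θ) := by
    refine (Finset.sum_subset (Finset.Icc_subset_Icc (by omega) le_rfl) ?_).symm
    intro j hj hj2
    have : c (j - 1) = 0 := by
      apply hc; simp only [Finset.mem_Icc] at *; omega
    simp [this]
  have h2 : ∑ j ∈ Finset.Icc a b, c j * Complex.exp (Complex.I * j * θ)
      = ∑ j ∈ Finset.Icc (a + 1) (b - 1), c j * Complex.exp (Complex.I * j * θ) := by
    refine (Finset.sum_subset (Finset.Icc_subset_Icc (by omega) (by omega)) ?_).symm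
    intro j hj hj2
    simp [hc j hj2]
  rw [h1, h2, Finset.mul_sum]
  have h3 : Finset.Icc (a + 1) (b - 1) = (Finset.Icc (a + 2) b).map
      (addRightEmbedding (-1)) := by
    rw [Finset.map_add_right_Icc]; congr 1 <;> omega
  rw [h3, Finset.sum_map]
  refine Finset.sum_congr rfl fun j _ => ?_
  simp only [addRightEmbedding_apply]
  rw [show j + (-1) = j - 1 from by ring]
  rw [show Complex.exp (Complex.I * θ) * (c (j - 1) * Complex.exp (Complex.I * ↑(j - 1) * θ))
      = c (j - 1) * (Complex.exp (Complex.I * ↑(j - 1) * θ) * Complex.exp (Complex.I * θ)) by ring,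
    ← Complex.exp_add]
  congr 2
  push_cast; ring

lemma sin_formula (θ : ℝ) : (Real.sin θ : ℂ)
    = Complex.I / 2 * Complex.exp (-(Complex.I * θ)) - Complex.I / 2 * Complex.exp (Complex.I * θ) := by
  rw [Complex.ofReal_sin, Complex.sin]
  ring_nf

lemma cos_formula (θ : ℝ) : (Real.cos θ : ℂ)
    = Complex.exp (-(Complex.I * θ)) / 2 + Complex.exp (Complex.I * θ) / 2 := by
  rw [Complex.ofReal_cos, Complex.cos]
  ring_nf

lemma sin_mul_sum (a b : ℤ) (c : ℤ → ℂ)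
    (hc : ∀ j, j ∉ Finset.Icc (a + 1) (b - 1) → c j = 0) (θ : ℝ) :
    (Real.sin θ : ℂ) * ∑ j ∈ Finset.Icc a b, c j * Complex.exp (Complex.I * j * θ)
      = ∑ j ∈ Finset.Icc a b,
          (Complex.I / 2 * c (j + 1) - Complex.I / 2 * c (j - 1)) * Complex.exp (Complex.I * j * θ) := by
  have expand : ∑ j ∈ Finset.Icc a b,
      (Complex.I / 2 * c (j + 1) - Complex.I / 2 * c (j - 1)) * Complex.exp (Complex.I * j * θ)
      = Complex.I / 2 * ∑ j ∈ Finset.Icc a b, c (j + 1) * Complex.exp (Complex.I * j * θ)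
        - Complex.I / 2 * ∑ j ∈ Finset.Icc a b, c (j - 1) * Complex.exp (Complex.I * j * θ) := by
    rw [Finset.mul_sum, Finset.mul_sum, ← Finset.sum_sub_distrib]
    exact Finset.sum_congr rfl fun j _ => by ring
  rw [expand, sum_shift_up a b c hc θ, sum_shift_down a b c hc θ, sin_formula]
  ring

lemma cos_mul_sum (a b : ℤ) (c : ℤ → ℂ)
    (hc : ∀ j, j ∉ Finset.Icc (a + 1) (b - 1) → c j = 0) (θ : ℝ) :
    (Real.cos θ : ℂ) * ∑ j ∈ Finset.Icc a b, c j * Complex.exp (Complex.I * j * θ)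
      = ∑ j ∈ Finset.Icc a b,
          ((c (j + 1) + c (j - 1)) / 2) * Complex.exp (Complex.I * j * θ) := by
  have expand : ∑ j ∈ Finset.Icc a b,
      ((c (j + 1) + c (j - 1)) / 2) * Complex.exp (Complex.I * j * θ)
      = (1 / 2 : ℂ) * ∑ j ∈ Finset.Icc a b, c (j + 1) * Complex.exp (Complex.I * j * θ)
        + (1 / 2 : ℂ) * ∑ j ∈ Finset.Icc a b, c (j - 1) * Complex.exp (Complex.I * j * θ) := by
    rw [Finset.mul_sum, Finset.mul_sum, ← Finset.sum_add_distrib]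
    exact Finset.sum_congr rfl fun j _ => by ring
  rw [expand, sum_shift_up a b c hc θ, sum_shift_down a b c hc θ, cos_formula]
  ring

lemma sin_mul_E (a b : ℤ) (K : Finset ℤ) (c : ℤ → ℤ → ℂ)
    (hc : ∀ j k, j ∉ Finset.Icc (a + 1) (b - 1) → c j k = 0) (lam θ : ℝ) :
    (Real.sin θ : ℂ) * E (Finset.Icc a b) K c lam θ
      = E (Finset.Icc a b) K (MsinOp c) lam θ := by
  unfold E MsinOp
  rw [Finset.sum_comm, Finset.sum_comm (t := K), Finset.mul_sum]
  refine Finset.sum_congr rfl fun k _ => ?_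
  have h1 : ∑ j ∈ Finset.Icc a b, c j k * Complex.exp (Complex.I * j * θ) * Complex.exp (Complex.I * k * lam)
      = ∑ j ∈ Finset.Icc a b, (c j k * Complex.exp (Complex.I * k * lam)) * Complex.exp (Complex.I * j * θ) :=
    Finset.sum_congr rfl fun j _ => by ring
  rw [h1, sin_mul_sum a b (fun j => c j k * Complex.exp (Complex.I * k * lam))
    (fun j hj => by show c j k * _ = 0; rw [hc j k hj]; ring) θ]
  exact Finset.sum_congr rfl fun j _ => by ring

lemma cos_mul_E (a b : ℤ) (K : Finset ℤ) (c : ℤ → ℤ → ℂ)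
    (hc : ∀ j k, j ∉ Finset.Icc (a + 1) (b - 1) → c j k = 0) (lam θ : ℝ) :
    (Real.cos θ : ℂ) * E (Finset.Icc a b) K c lam θ
      = E (Finset.Icc a b) K (McosOp c) lam θ := by
  unfold E McosOp
  rw [Finset.sum_comm, Finset.sum_comm (t := K), Finset.mul_sum]
  refine Finset.sum_congr rfl fun k _ => ?_
  have h1 : ∑ j ∈ Finset.Icc a b, c j k * Complex.exp (Complex.I * j * θ) * Complex.exp (Complex.I * k * lam)
      = ∑ j ∈ Finset.Icc a b, (c j k * Complex.exp (Complex.I * k * lam)) * Complex.exp (Complex.I * j * θ) :=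
    Finset.sum_congr rfl fun j _ => by ring
  rw [h1, cos_mul_sum a b (fun j => c j k * Complex.exp (Complex.I * k * lam))
    (fun j hj => by show c j k * _ = 0; rw [hc j k hj]; ring) θ]
  exact Finset.sum_congr rfl fun j _ => by ring

lemma E_extend (J J' K : Finset ℤ) (hJ : J ⊆ J') (c : ℤ → ℤ → ℂ)
    (hc : ∀ j, j ∉ J → ∀ k, c j k = 0) (lam θ : ℝ) :
    E J K c lam θ = E J' K c lam θ := by
  unfold E
  exact Finset.sum_subset hJ fun j _ hj => by simp [hc j hj]

lemma integral_exp_int (n : ℤ) :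
    (∫ t in (0:ℝ)..(2 * π), Complex.exp (Complex.I * n * t))
      = if n = 0 then ((2 * π : ℝ) : ℂ) else 0 := by
  split_ifs with h
  · subst h
    simp
  · rw [integral_exp_mul_complex
      (mul_ne_zero Complex.I_ne_zero (Int.cast_ne_zero.mpr h))]
    rw [show Complex.I * (n : ℂ) * ((2 * π : ℝ) : ℂ) = (n : ℂ) * (2 * ↑π * Complex.I) by
      push_cast; ring]
    rw [Complex.exp_int_mul_two_pi_mul_I]
    simp

lemma oneD_unique (s : Finset ℤ) (c : ℤ → ℂ)
    (h : ∀ t : ℝ, ∑ j ∈ s, c j * Complex.exp (Complex.I * j * t) = 0) :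
    ∀ j ∈ s, c j = 0 := by
  intro j hj
  have key : ∀ t : ℝ, ∑ j' ∈ s, c j' * Complex.exp (Complex.I * (j' - j : ℤ) * t) = 0 := by
    intro t
    have h2 : (∑ j' ∈ s, c j' * Complex.exp (Complex.I * j' * t))
        * Complex.exp (Complex.I * (-j : ℤ) * t) = 0 := by rw [h t, zero_mul]
    rw [Finset.sum_mul] at h2
    rw [← h2]
    refine Finset.sum_congr rfl fun j' _ => ?_
    rw [show c j' * Complex.exp (Complex.I * (j' : ℂ) * t) * Complex.exp (Complex.I * ((-j : ℤ) : ℂ) * t)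
        = c j' * (Complex.exp (Complex.I * (j' : ℂ) * t) * Complex.exp (Complex.I * ((-j : ℤ) : ℂ) * t)) from by ring,
      ← Complex.exp_add]
    congr 2
    push_cast; ring
  have int0 : (∫ t in (0:ℝ)..(2 * π),
      ∑ j' ∈ s, c j' * Complex.exp (Complex.I * (j' - j : ℤ) * t)) = 0 := by
    simp only [key, intervalIntegral.integral_zero]
  rw [intervalIntegral.integral_finset_sum (fun j' _ => by
    apply Continuous.intervalIntegrable
    fun_prop)] at int0
  have hterm : ∀ j' ∈ s, (∫ t in (0:ℝ)..(2 * π),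
      c j' * Complex.exp (Complex.I * (j' - j : ℤ) * t))
      = if j' = j then c j * ((2 * π : ℝ) : ℂ) else 0 := by
    intro j' _
    rw [intervalIntegral.integral_const_mul, integral_exp_int (j' - j)]
    by_cases hjj : j' = j
    · subst hjj; simp
    · rw [if_neg (by omega), if_neg hjj, mul_zero]
  rw [Finset.sum_congr rfl hterm, Finset.sum_ite_eq' s j, if_pos hj] at int0
  have h2π : ((2 * π : ℝ) : ℂ) ≠ 0 := by
    simp [Real.pi_ne_zero]
  exact (mul_eq_zero.mp int0).resolve_right h2π

lemma E_unique (J K : Finset ℤ) (c : ℤ → ℤ → ℂ)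
    (h : ∀ lam θ : ℝ, E J K c lam θ = 0) :
    ∀ j ∈ J, ∀ k ∈ K, c j k = 0 := by
  intro j hj k hk
  have h1 : ∀ lam : ℝ, ∀ j ∈ J, ∑ k ∈ K, c j k * Complex.exp (Complex.I * k * lam) = 0 := by
    intro lam
    apply oneD_unique
    intro t
    have h0 := h lam t
    unfold E at h0
    rw [← h0]
    refine Finset.sum_congr rfl fun j' _ => ?_
    rw [Finset.sum_mul]
    exact Finset.sum_congr rfl fun k' _ => by ring
  exact oneD_unique K (fun k => c j k) (fun lam => h1 lam j hj) k hk

lemma E_add3 (J K : Finset ℤ) (c1 c2 c3 : ℤ → ℤ → ℂ) (lam θ : ℝ) :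
    E J K c1 lam θ + E J K c2 lam θ + E J K c3 lam θ
      = E J K (fun j k => c1 j k + c2 j k + c3 j k) lam θ := by
  unfold E
  rw [← Finset.sum_add_distrib, ← Finset.sum_add_distrib]
  refine Finset.sum_congr rfl fun j _ => ?_
  rw [← Finset.sum_add_distrib, ← Finset.sum_add_distrib]
  exact Finset.sum_congr rfl fun k _ => by ring

lemma E_sub (J K : Finset ℤ) (c1 c2 : ℤ → ℤ → ℂ) (lam θ : ℝ) :
    E J K c1 lam θ - E J K c2 lam θ
      = E J K (fun j k => c1 j k - c2 j k) lam θ := by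
  unfold E
  rw [← Finset.sum_sub_distrib]
  refine Finset.sum_congr rfl fun j _ => ?_
  rw [← Finset.sum_sub_distrib]
  exact Finset.sum_congr rfl fun k _ => by ring

lemma Gsupp (X : ℤ → ℤ → ℂ) (a b : ℤ) (K : Finset ℤ)
    (hX : ∀ j k, j ∉ Finset.Icc a b ∨ k ∉ K → X j k = 0) (j k : ℤ)
    (h : j ∉ Finset.Icc (a - 2) (b + 2) ∨ k ∉ K) :
    MsinOp (MsinOp (Dth (Dth X))) j k + McosOp (MsinOp (Dth X)) j k
      + (Complex.I * k) ^ 2 * X j k = 0 := by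
  have hz : ∀ d : ℤ, j - 2 ≤ d → d ≤ j + 2 → X d k = 0 := by
    intro d h1 h2
    apply hX
    rcases h with hj | hk
    · left; simp only [Finset.mem_Icc] at hj ⊢; omega
    · right; exact hk
  simp only [MsinOp, McosOp, Dth]
  simp only [hz (j + 1 + 1) (by omega) (by omega), hz (j + 1 - 1) (by omega) (by omega),
    hz (j - 1 + 1) (by omega) (by omega), hz (j - 1 - 1) (by omega) (by omega),
    hz (j + 1) (by omega) (by omega), hz (j - 1) (by omega) (by omega),
    hz j (by omega) (by omega)]
  ring

lemma main_aux (a b : ℤ) (K : Finset ℤ) (X F : ℤ → ℤ → ℂ) (ft u : ℝ → ℝ → ℂ)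
    (hu : ∀ lam θ : ℝ, u lam θ = E (Finset.Icc a b) K X lam θ)
    (hXsupp : ∀ j k : ℤ, j ∉ Finset.Icc a b ∨ k ∉ K → X j k = 0)
    (hF : ∀ lam θ : ℝ, (Real.sin θ : ℂ) ^ 2 * ft lam θ
      = E (Finset.Icc (a - 2) (b + 2)) K F lam θ)
    (hFsupp : ∀ j k : ℤ, j ∉ Finset.Icc (a - 2) (b + 2) ∨ k ∉ K → F j k = 0)
    (hpde : ∀ lam θ : ℝ,
      (Real.sin θ : ℂ) ^ 2 * deriv (fun t => deriv (fun t' => u lam t') t) θ +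
        (Real.cos θ : ℂ) * (Real.sin θ : ℂ) * deriv (fun t => u lam t) θ +
        deriv (fun l => deriv (fun l' => u l' θ) l) lam = (Real.sin θ : ℂ) ^ 2 * ft lam θ) :
    ∀ j k : ℤ,
      MsinOp (MsinOp (Dth (Dth X))) j k + McosOp (MsinOp (Dth X)) j k +
        (Complex.I * k) ^ 2 * X j k = F j k := by
  have hfun : ∀ lam : ℝ, (fun t' => u lam t') = fun t' => E (Finset.Icc a b) K X lam t' :=
    fun lam => funext fun t' => hu lam t'
  have hfun2 : ∀ θ : ℝ, (fun l' => u l' θ) = fun l' => E (Finset.Icc a b) K X l' θ :=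
    fun θ => funext fun l' => hu l' θ
  -- supports of coefficient families
  have hXj : ∀ j, j ∉ Finset.Icc a b → ∀ k, X j k = 0 := fun j hj k => hXsupp j k (Or.inl hj)
  have hX2 : ∀ j, j ∉ Finset.Icc a b → ∀ k, Dth (Dth X) j k = 0 := by
    intro j hj k; simp [Dth, hXj j hj k]
  have hX1 : ∀ j, j ∉ Finset.Icc a b → ∀ k, Dth X j k = 0 := by
    intro j hj k; simp [Dth, hXj j hj k]
  have hXl : ∀ j, j ∉ Finset.Icc a b → ∀ k, Dlam (Dlam X) j k = 0 := by
    intro j hj k; simp [Dlam, hXj j hj k]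
  have hsub : Finset.Icc a b ⊆ Finset.Icc (a - 2) (b + 2) :=
    Finset.Icc_subset_Icc (by omega) (by omega)
  have hmem : ∀ j : ℤ, j ∉ Finset.Icc (a - 2 + 1) (b + 2 - 1) → j ∉ Finset.Icc a b := by
    intro j hj; simp only [Finset.mem_Icc] at *; omega
  have hc1 : ∀ j k, j ∉ Finset.Icc (a - 2 + 1) (b + 2 - 1) → Dth (Dth X) j k = 0 :=
    fun j k hj => hX2 j (hmem j hj) k
  have hc2 : ∀ j k, j ∉ Finset.Icc (a - 2 + 1) (b + 2 - 1) →
      MsinOp (Dth (Dth X)) j k = 0 := by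
    intro j k hj
    simp only [Finset.mem_Icc] at hj
    have p1 : j + 1 ∉ Finset.Icc a b := by simp only [Finset.mem_Icc]; omega
    have p2 : j - 1 ∉ Finset.Icc a b := by simp only [Finset.mem_Icc]; omega
    simp [MsinOp, hX2 (j + 1) p1 k, hX2 (j - 1) p2 k]
  have hd1 : ∀ j k, j ∉ Finset.Icc (a - 2 + 1) (b + 2 - 1) → Dth X j k = 0 :=
    fun j k hj => hX1 j (hmem j hj) k
  have hd2 : ∀ j k, j ∉ Finset.Icc (a - 2 + 1) (b + 2 - 1) →
      MsinOp (Dth X) j k = 0 := by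
    intro j k hj
    simp only [Finset.mem_Icc] at hj
    have p1 : j + 1 ∉ Finset.Icc a b := by simp only [Finset.mem_Icc]; omega
    have p2 : j - 1 ∉ Finset.Icc a b := by simp only [Finset.mem_Icc]; omega
    simp [MsinOp, hX1 (j + 1) p1 k, hX1 (j - 1) p2 k]
  -- the key pointwise identity
  set G : ℤ → ℤ → ℂ := fun j k =>
    MsinOp (MsinOp (Dth (Dth X))) j k + McosOp (MsinOp (Dth X)) j k + Dlam (Dlam X) j k
    with hG
  have key : ∀ lam θ : ℝ, E (Finset.Icc (a - 2) (b + 2)) K G lam θ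
      = E (Finset.Icc (a - 2) (b + 2)) K F lam θ := by
    intro lam θ
    have hp := hpde lam θ
    rw [hfun lam, hfun2 θ] at hp
    have hθθ : deriv (fun t => deriv (fun t' => E (Finset.Icc a b) K X lam t') t) θ
        = E (Finset.Icc a b) K (Dth (Dth X)) lam θ := by
      have h1 : (fun t => deriv (fun t' => E (Finset.Icc a b) K X lam t') t)
          = fun t => E (Finset.Icc a b) K (Dth X) lam t :=
        funext fun t => (E_hasDerivAt_theta _ _ _ _ t).deriv
      rw [h1]
      exact (E_hasDerivAt_theta _ _ _ _ θ).deriv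
    have hθ1 : deriv (fun t => E (Finset.Icc a b) K X lam t) θ
        = E (Finset.Icc a b) K (Dth X) lam θ := (E_hasDerivAt_theta _ _ _ _ θ).deriv
    have hll : deriv (fun l => deriv (fun l' => E (Finset.Icc a b) K X l' θ) l) lam
        = E (Finset.Icc a b) K (Dlam (Dlam X)) lam θ := by
      have h1 : (fun l => deriv (fun l' => E (Finset.Icc a b) K X l' θ) l)
          = fun l => E (Finset.Icc a b) K (Dlam X) l θ :=
        funext fun l => (E_hasDerivAt_lam _ _ _ l θ).deriv
      rw [h1]
      exact (E_hasDerivAt_lam _ _ _ lam θ).deriv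
    rw [hθθ, hθ1, hll] at hp
    rw [E_extend _ _ K hsub _ hX2 lam θ, E_extend _ _ K hsub _ hX1 lam θ,
      E_extend _ _ K hsub _ hXl lam θ] at hp
    rw [pow_two, mul_assoc, sin_mul_E (a - 2) (b + 2) K _ hc1 lam θ,
      sin_mul_E (a - 2) (b + 2) K _ hc2 lam θ, mul_assoc,
      sin_mul_E (a - 2) (b + 2) K _ hd1 lam θ,
      cos_mul_E (a - 2) (b + 2) K _ hd2 lam θ, E_add3] at hp
    rw [hp, show ((Real.sin θ : ℂ)) * (Real.sin θ : ℂ) = ((Real.sin θ : ℂ)) ^ 2 from (sq _).symm,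
      hF lam θ]
  have hzero : ∀ j ∈ Finset.Icc (a - 2) (b + 2), ∀ k ∈ K, G j k - F j k = 0 := by
    apply E_unique
    intro lam θ
    rw [← E_sub, key lam θ, sub_self]
  intro j k
  by_cases hjk : j ∈ Finset.Icc (a - 2) (b + 2) ∧ k ∈ K
  · have h := hzero j hjk.1 k hjk.2
    rw [sub_eq_zero] at h
    rw [← h, hG]
    simp only [Dlam]
    ring
  · have h' : j ∉ Finset.Icc (a - 2) (b + 2) ∨ k ∉ K := by tauto
    rw [hFsupp j k h']
    exact Gsupp X a b K hXsupp j k h'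

end PoissonAux

/-- If a 2D trigonometric polynomial `u(λ,θ) = Σ_j Σ_k X_{jk} e^{ijθ}e^{ikλ}` solves
the doubled Poisson equation `sin²θ·u_θθ + cos θ sin θ·u_θ + u_λλ = sin²θ·f̃`, whose
right-hand side has Fourier coefficients `F`, then `X` satisfies the Sylvester
equation `(M_sin² D_m² + M_cos M_sin D_m) X + X D_n² = F` entrywise. -/
theorem poisson_sylvester_equation (m n : ℕ) (X F : ℤ → ℤ → ℂ)
    (ft u : ℝ → ℝ → ℂ)
    (hu : ∀ lam θ : ℝ, u lam θ =
      ∑ j ∈ Finset.Icc (-(m : ℤ) / 2) ((m : ℤ) / 2 - 1),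
        ∑ k ∈ Finset.Icc (-(n : ℤ) / 2) ((n : ℤ) / 2 - 1),
          X j k * Complex.exp (Complex.I * j * θ) * Complex.exp (Complex.I * k * lam))
    (hXsupp : ∀ j k : ℤ,
      j ∉ Finset.Icc (-(m : ℤ) / 2) ((m : ℤ) / 2 - 1) ∨
        k ∉ Finset.Icc (-(n : ℤ) / 2) ((n : ℤ) / 2 - 1) → X j k = 0)
    (hF : ∀ lam θ : ℝ, ((Real.sin θ : ℂ)) ^ 2 * ft lam θ =
      ∑ j ∈ Finset.Icc (-(m : ℤ) / 2 - 2) ((m : ℤ) / 2 + 1),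
        ∑ k ∈ Finset.Icc (-(n : ℤ) / 2) ((n : ℤ) / 2 - 1),
          F j k * Complex.exp (Complex.I * j * θ) * Complex.exp (Complex.I * k * lam))
    (hFsupp : ∀ j k : ℤ,
      j ∉ Finset.Icc (-(m : ℤ) / 2 - 2) ((m : ℤ) / 2 + 1) ∨
        k ∉ Finset.Icc (-(n : ℤ) / 2) ((n : ℤ) / 2 - 1) → F j k = 0)
    (hpde : ∀ lam θ : ℝ,
      ((Real.sin θ : ℂ)) ^ 2 * deriv (fun t => deriv (fun t' => u lam t') t) θ +
          (Real.cos θ : ℂ) * (Real.sin θ : ℂ) * deriv (fun t => u lam t) θ +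
          deriv (fun l => deriv (fun l' => u l' θ) l) lam =
        ((Real.sin θ : ℂ)) ^ 2 * ft lam θ) :
    ∀ j k : ℤ,
      MsinOp (MsinOp (Dth (Dth X))) j k + McosOp (MsinOp (Dth X)) j k +
          (Complex.I * k) ^ 2 * X j k =
        F j k := by
  have hb2 : ((m : ℤ) / 2 + 1) = ((m : ℤ) / 2 - 1) + 2 := by omega
  rw [hb2] at hF hFsupp
  exact PoissonAux.main_aux (-(m : ℤ) / 2) ((m : ℤ) / 2 - 1) _ X F ft u hu hXsupp hF hFsupp hpde
end
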